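/- Let s be the Lie algebra generated by {X_{ir}^±, H_{ir}}_{i∈I, r≥0} with relations: [H_{ir},H_{js}]=0, [H_{ir},X_{js}^±]=±2d_{ij}X_{j,r+s}^±, [X_{ir}^+,X_{js}^-]=δ_{ij}H_{i,r+s}, [X_{i,r+1}^±,X_{js}^±]=[X_{ir}^±,X_{j,s+1}^±], and ad(X_{i0}^±)^{1-a_{ij}}(X_{jr}^±)=0 for i≠j. Then for all i≠j, m = 1 - a_{ij}, s ≥ 0 and all r_1,…,r_m ≥ 0: [X_{i,r_1}^±, [X_{i,r_2}^±, …, [X_{i,r_m}^±, X_{js}^±]⋯]] = 0. -/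
import Mathlib


/-- In the Lie algebra `s` generated by `X_{ir}^±, H_{ir}` (i ∈ I, r ≥ 0)
subject to the relations
`[H_{ir},H_{js}] = 0`, `[H_{ir},X_{js}^±] = ±2d_{ij} X_{j,r+s}^±`,
`[X_{ir}^+,X_{js}^-] = δ_{ij} H_{i,r+s}`, `[X_{i,r+1}^±,X_{js}^±] = [X_{ir}^±,X_{j,s+1}^±]`,
and the degree-zero Serre relations `ad(X_{i0}^±)^{1-a_{ij}}(X_{jr}^±) = 0` for `i ≠ j`,
the Serre relations hold in all degrees:
`[X_{i,r_1}^±, [X_{i,r_2}^±, …, [X_{i,r_m}^±, X_{js}^±]⋯]] = 0` for `i ≠ j`,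
`m = 1 - a_{ij}`, and all `s, r_1, …, r_m ≥ 0`.
Here `A = (a_{ij})` is a symmetrizable generalized Cartan matrix (so `a_{ij} ≤ 0` for
`i ≠ j`), `d_{ij} = (α_i,α_j)/2` with `d_{ii} ≠ 0`; signs are encoded by `ε : Bool`. -/
theorem stmt8 {L : Type*} [LieRing L] [LieAlgebra ℂ L] {I : Type*} [DecidableEq I]
    (X : Bool → I → ℕ → L) (H : I → ℕ → L) (d : I → I → ℂ) (a : I → I → ℤ)
    (hdii : ∀ i, d i i ≠ 0)
    (ha : ∀ i j, i ≠ j → a i j ≤ 0)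
    (hHH : ∀ (i j : I) (r s : ℕ), ⁅H i r, H j s⁆ = 0)
    (hHX : ∀ (ε : Bool) (i j : I) (r s : ℕ),
      ⁅H i r, X ε j s⁆ = ((if ε then 1 else -1) * 2 * d i j) • X ε j (r + s))
    (hXpm : ∀ (i j : I) (r s : ℕ),
      ⁅X true i r, X false j s⁆ = if i = j then H i (r + s) else 0)
    (hshift : ∀ (ε : Bool) (i j : I) (r s : ℕ),
      ⁅X ε i (r + 1), X ε j s⁆ = ⁅X ε i r, X ε j (s + 1)⁆)
    (hserre0 : ∀ (ε : Bool) (i j : I), i ≠ j → ∀ r : ℕ,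
      (fun y => ⁅X ε i 0, y⁆)^[(1 - a i j).toNat] (X ε j r) = 0) :
    ∀ (ε : Bool) (i j : I), i ≠ j → ∀ (s : ℕ) (rs : List ℕ),
      rs.length = (1 - a i j).toNat →
        rs.foldr (fun r acc => ⁅X ε i r, acc⁆) (X ε j s) = 0 := by
  intro ε i j hij
  -- generators with same ε, i commute
  have h0 : ∀ r r' : ℕ, ⁅X ε i r, X ε i r'⁆ = ⁅X ε i 0, X ε i (r + r')⁆ := by
    intro r
    induction r with
    | zero => intro r'; rw [Nat.zero_add]
    | succ n ih =>
        intro r'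
        rw [hshift, ih]
        have h : n + (r' + 1) = n + 1 + r' := by omega
        rw [h]
  have hXX : ∀ r r' : ℕ, ⁅X ε i r, X ε i r'⁆ = 0 := by
    intro r r'
    have hsym : ⁅X ε i r, X ε i r'⁆ = ⁅X ε i r', X ε i r⁆ := by
      rw [h0 r r', h0 r' r, Nat.add_comm]
    have h3 : ⁅X ε i r, X ε i r'⁆ = -⁅X ε i r, X ε i r'⁆ := by
      conv_lhs => rw [hsym]
      exact (lie_skew _ _).symm
    have h4 : (2 : ℂ) • ⁅X ε i r, X ε i r'⁆ = 0 := by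
      rw [two_smul]
      nth_rewrite 2 [h3]
      exact add_neg_cancel _
    rcases smul_eq_zero.mp h4 with h | h
    · exact absurd h two_ne_zero
    · exact h
  have hcomm : ∀ (r r' : ℕ) (y : L),
      ⁅X ε i r, ⁅X ε i r', y⁆⁆ = ⁅X ε i r', ⁅X ε i r, y⁆⁆ := by
    intro r r' y
    rw [leibniz_lie, hXX, zero_lie, zero_add]
  set Z : ℕ → ℕ → L :=
    fun n t => (List.replicate n 0).foldr (fun r acc => ⁅X ε i r, acc⁆) (X ε j t) with hZ
  have hZsucc : ∀ n t, Z (n + 1) t = ⁅X ε i 0, Z n t⁆ := by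
    intro n t; rw [hZ]; simp [List.replicate_succ]
  have hZzero : ∀ t, Z 0 t = X ε j t := fun t => rfl
  have hpush : ∀ n r t, ⁅X ε i (r + 1), Z n t⁆ = ⁅X ε i r, Z n (t + 1)⁆ := by
    intro n
    induction n with
    | zero => intro r t; rw [hZzero, hZzero]; exact hshift ε i j r t
    | succ n ih =>
        intro r t
        rw [hZsucc, hZsucc, hcomm, ih, hcomm]
  have hshiftZ : ∀ r n t, ⁅X ε i r, Z n t⁆ = ⁅X ε i 0, Z n (t + r)⁆ := by
    intro r
    induction r with
    | zero => intro n t; rw [Nat.add_zero]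
    | succ m ih =>
        intro n t
        rw [hpush, ih]
        congr 2
        omega
  have hmain : ∀ (rs : List ℕ) (s : ℕ),
      rs.foldr (fun r acc => ⁅X ε i r, acc⁆) (X ε j s) = Z rs.length (s + rs.sum) := by
    intro rs
    induction rs with
    | nil => intro s; simp [hZzero]
    | cons r rs ih =>
        intro s
        rw [List.foldr_cons, ih, hshiftZ, List.length_cons, hZsucc]
        congr 2
        simp
        omega
  have hiter : ∀ m t, Z m t = (fun y => ⁅X ε i 0, y⁆)^[m] (X ε j t) := by
    intro m
    induction m with
    | zero => intro t; rfl
    | succ n ih =>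
        intro t
        rw [hZsucc, Function.iterate_succ_apply', ih]
  intro s rs hlen
  rw [hmain, hlen, hiter]
  exact hserre0 ε i j hij _
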